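/- For every nonnegative integer n, the map (x,y,z) ↦ (−2z−1, 2x, −2y−1) is a bijection from the set of integer triples (x,y,z) with 7x² + 7y² + 7z² + 2x + 4y + 6z = n onto the set of integer triples with 7x² + 7y² + 7z² + 2x + 4y + 6z = 4n + 6. -/
import Mathlib

lemma parity_aux (n : ℕ) (a b c : ℤ)
    (hp : 7 * a ^ 2 + 7 * b ^ 2 + 7 * c ^ 2 + 2 * a + 4 * b + 6 * c = 4 * n + 6) :
    a % 2 = 1 ∧ b % 2 = 0 ∧ c % 2 = 1 := by
  have ha : a = 2 * (a / 2) + a % 2 := (Int.mul_ediv_add_emod a 2).symm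
  have hb : b = 2 * (b / 2) + b % 2 := (Int.mul_ediv_add_emod b 2).symm
  have hc : c = 2 * (c / 2) + c % 2 := (Int.mul_ediv_add_emod c 2).symm
  set qa := a / 2; set qb := b / 2; set qc := c / 2
  have ra : a % 2 = 0 ∨ a % 2 = 1 := Int.emod_two_eq a
  have rb : b % 2 = 0 ∨ b % 2 = 1 := Int.emod_two_eq b
  have rc : c % 2 = 0 ∨ c % 2 = 1 := Int.emod_two_eq c
  rcases ra with ra | ra <;> rcases rb with rb | rb <;> rcases rc with rc | rc <;>
    first
    | exact ⟨ra, rb, rc⟩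
    | · exfalso
        rw [ra] at ha; rw [rb] at hb; rw [rc] at hc
        rw [ha, hb, hc] at hp
        ring_nf at hp
        generalize qa ^ 2 = A at hp
        generalize qb ^ 2 = B at hp
        generalize qc ^ 2 = C at hp
        omega

/-- For every `n ∈ ℕ`, the map `(x,y,z) ↦ (-2z-1, 2x, -2y-1)` is
a bijection from the integer triples with `7x² + 7y² + 7z² + 2x + 4y + 6z = n`
onto the integer triples satisfying the same form equal to `4n + 6`. -/
theorem selfconjugate_7cores_n_4n6 (n : ℕ) :
    Set.BijOn
      (fun p : ℤ × ℤ × ℤ => ((-2 * p.2.2 - 1, 2 * p.1, -2 * p.2.1 - 1) : ℤ × ℤ × ℤ))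
      {p : ℤ × ℤ × ℤ | 7 * p.1 ^ 2 + 7 * p.2.1 ^ 2 + 7 * p.2.2 ^ 2
        + 2 * p.1 + 4 * p.2.1 + 6 * p.2.2 = n}
      {p : ℤ × ℤ × ℤ | 7 * p.1 ^ 2 + 7 * p.2.1 ^ 2 + 7 * p.2.2 ^ 2
        + 2 * p.1 + 4 * p.2.1 + 6 * p.2.2 = 4 * n + 6} := by
  refine ⟨?_, ?_, ?_⟩
  · rintro ⟨x, y, z⟩ hp
    simp only [Set.mem_setOf_eq] at hp ⊢
    linear_combination 4 * hp
  · rintro ⟨x, y, z⟩ - ⟨x', y', z'⟩ - h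
    simp only [Prod.mk.injEq] at h
    obtain ⟨h1, h2, h3⟩ := h
    refine Prod.ext ?_ (Prod.ext ?_ ?_) <;> simp <;> omega
  · rintro ⟨a, b, c⟩ hp
    simp only [Set.mem_setOf_eq] at hp
    obtain ⟨ha, hb, hc⟩ := parity_aux n a b c hp
    refine ⟨(b / 2, (-c - 1) / 2, (-a - 1) / 2), ?_, ?_⟩
    · simp only [Set.mem_setOf_eq]
      obtain ⟨x, hx⟩ : ∃ x, b = 2 * x := ⟨b / 2, by omega⟩
      obtain ⟨y, hy⟩ : ∃ y, c = -2 * y - 1 := ⟨(-c - 1) / 2, by omega⟩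
      obtain ⟨z, hz⟩ : ∃ z, a = -2 * z - 1 := ⟨(-a - 1) / 2, by omega⟩
      have hx' : b / 2 = x := by omega
      have hy' : (-c - 1) / 2 = y := by omega
      have hz' : (-a - 1) / 2 = z := by omega
      rw [hx', hy', hz']
      subst hx hy hz
      have h2 : 4 * (7 * x ^ 2 + 7 * y ^ 2 + 7 * z ^ 2 + 2 * x + 4 * y + 6 * z) + 6
          = 4 * n + 6 := by linear_combination hp
      set S := 7 * x ^ 2 + 7 * y ^ 2 + 7 * z ^ 2 + 2 * x + 4 * y + 6 * z
      omega
    · simp only [Prod.mk.injEq]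
      refine ⟨by omega, by omega, by omega⟩
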